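/- arXiv:1912.03387 — 4 statements merged into one kernel-verified Lean document; each statement's English description precedes it below -/
import Mathlib

section
/- Let P_{XY} be a joint probability measure on 𝒳×𝒴 with marginals P_X, P_Y, and assume that the set A₃ = {(x,y) ∈ A : P_X(A_y) = P_Y(A_x) = 0} has P_{XY}-measure zero for every measurable A with (P_X×P_Y)(A) = 0 (nonsingularity). Then P_{XY} is absolutely continuous with respect to P_X × P_Y, and hence the Radon–Nikodym derivative dP_{XY}/d(P_X×P_Y) exists. -/
open MeasureTheory

/-- If the joint probability measure `P_{XY}` is nonsingular, i.e. for every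
measurable `A` with `(P_X × P_Y)(A) = 0` the set
`A₃ = {(x,y) ∈ A : P_X(A_y) = P_Y(A_x) = 0}` is `P_{XY}`-null, then
`P_{XY} ≪ P_X × P_Y`, hence the Radon–Nikodym derivative exists. -/
theorem stmt1 {X Y : Type*} [MetricSpace X] [MeasurableSpace X] [BorelSpace X]
    [MetricSpace Y] [MeasurableSpace Y] [BorelSpace Y]
    (P_XY : Measure (X × Y)) (P_X : Measure X) (P_Y : Measure Y)
    [IsProbabilityMeasure P_XY]
    (hX : P_XY.map Prod.fst = P_X) (hY : P_XY.map Prod.snd = P_Y)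
    (hns : ∀ A : Set (X × Y), MeasurableSet A → (P_X.prod P_Y) A = 0 →
      P_XY {p : X × Y | p ∈ A ∧ P_X {x | (x, p.2) ∈ A} = 0 ∧
        P_Y {y | (p.1, y) ∈ A} = 0} = 0) :
    P_XY ≪ P_X.prod P_Y := by
  have hPX : IsProbabilityMeasure P_X := by
    rw [← hX]; exact Measure.isProbabilityMeasure_map measurable_fst.aemeasurable
  have hPY : IsProbabilityMeasure P_Y := by
    rw [← hY]; exact Measure.isProbabilityMeasure_map measurable_snd.aemeasurable
  refine Measure.AbsolutelyContinuous.mk fun A hA hA0 => ?_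
  -- a.e. sections are null
  have h1 : ∀ᵐ x ∂P_X, P_Y (Prod.mk x ⁻¹' A) = 0 := (Measure.measure_prod_null hA).mp hA0
  have hswap : (P_Y.prod P_X) (Prod.swap ⁻¹' A) = 0 := by
    rw [← Measure.prod_swap, Measure.map_apply measurable_swap (measurable_swap hA)]
    convert hA0 using 2; ext p; simp
  have h2 : ∀ᵐ y ∂P_Y, P_X {x | (x, y) ∈ A} = 0 := by
    have := (Measure.measure_prod_null (measurable_swap hA) (μ := P_Y) (ν := P_X)).mp hswap
    filter_upwards [this] with y hy
    simpa [Set.preimage] using hy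
  set C : Set X := {x | P_Y (Prod.mk x ⁻¹' A) ≠ 0} with hC_def
  set D : Set Y := {y | P_X {x | (x, y) ∈ A} ≠ 0} with hD_def
  have hCmeas : MeasurableSet C :=
    (measurable_measure_prodMk_left (ν := P_Y) hA) (measurableSet_singleton 0) |>.compl
  have hDmeas : MeasurableSet D := by
    have : Measurable fun y => P_X {x | (x, y) ∈ A} := by
      have := measurable_measure_prodMk_left (ν := P_X) (measurable_swap hA)
      simpa [Set.preimage] using this
    exact (this (measurableSet_singleton 0)).compl
  have hC0 : P_X C = 0 := by
    have := h1
    rwa [ae_iff] at this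
  have hD0 : P_Y D = 0 := by
    have := h2
    rwa [ae_iff] at this
  have hsub : A ⊆ (Prod.fst ⁻¹' C) ∪ (Prod.snd ⁻¹' D) ∪
      {p : X × Y | p ∈ A ∧ P_X {x | (x, p.2) ∈ A} = 0 ∧ P_Y {y | (p.1, y) ∈ A} = 0} := by
    intro p hp
    by_cases h₁ : P_Y (Prod.mk p.1 ⁻¹' A) = 0
    · by_cases h₂ : P_X {x | (x, p.2) ∈ A} = 0
      · exact Or.inr ⟨hp, h₂, by simpa [Set.preimage] using h₁⟩
      · exact Or.inl (Or.inr h₂)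
    · exact Or.inl (Or.inl h₁)
  have hfst : P_XY (Prod.fst ⁻¹' C) = 0 := by
    rw [← Measure.map_apply measurable_fst hCmeas, hX]; exact hC0
  have hsnd : P_XY (Prod.snd ⁻¹' D) = 0 := by
    rw [← Measure.map_apply measurable_snd hDmeas, hY]; exact hD0
  have h3 := hns A hA hA0
  refine le_antisymm ?_ zero_le
  calc P_XY A ≤ P_XY ((Prod.fst ⁻¹' C) ∪ (Prod.snd ⁻¹' D) ∪
      {p : X × Y | p ∈ A ∧ P_X {x | (x, p.2) ∈ A} = 0 ∧ P_Y {y | (p.1, y) ∈ A} = 0}) :=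
        measure_mono hsub
    _ ≤ P_XY ((Prod.fst ⁻¹' C) ∪ (Prod.snd ⁻¹' D)) + P_XY _ := measure_union_le _ _
    _ ≤ (P_XY (Prod.fst ⁻¹' C) + P_XY (Prod.snd ⁻¹' D)) + P_XY _ :=
        add_le_add_left (measure_union_le _ _) _
    _ = 0 := by rw [hfst, hsnd, h3]; simp
end

section
/- Let W ~ Binomial(n, p) with 0 < p < 1 and let k ≥ 2 be an integer, with n ≥ 4. Then |E[log((W + k)/(np + k))]| ≤ 1/(np + k). -/
open Finset Real

/- ### Auxiliary lemmas -/

lemma aux_choose_descFactorial (m i r : ℕ) (hri : r ≤ i) (him : i ≤ m) :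
    m.choose i * i.descFactorial r = m.descFactorial r * (m - r).choose (i - r) := by
  rw [Nat.descFactorial_eq_factorial_mul_choose i r, Nat.descFactorial_eq_factorial_mul_choose m r]
  rw [← Nat.mul_assoc, Nat.mul_comm (m.choose i) (Nat.factorial r), Nat.mul_assoc,
    Nat.choose_mul hri]
  ring

/-- Binomial "factorial moment" sum. -/
lemma aux_sum_desc (m r : ℕ) (hr : r ≤ m) (p q : ℝ) :
    ∑ i ∈ Finset.range (m + 1),
        (m.choose i : ℝ) * p ^ i * q ^ (m - i) * (i.descFactorial r : ℝ)
      = (m.descFactorial r : ℝ) * p ^ r * (p + q) ^ (m - r) := by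
  have hsub : ∑ i ∈ Finset.range (m + 1),
      (m.choose i : ℝ) * p ^ i * q ^ (m - i) * (i.descFactorial r : ℝ)
      = ∑ i ∈ Finset.Ico r (m + 1),
      (m.choose i : ℝ) * p ^ i * q ^ (m - i) * (i.descFactorial r : ℝ) := by
    rw [Finset.range_eq_Ico]
    refine (Finset.sum_subset (Finset.Ico_subset_Ico (Nat.zero_le r) le_rfl) ?_).symm
    intro x hx hnx
    have hxr : x < r := by
      simp only [Finset.mem_Ico] at hx hnx
      omega
    rw [Nat.descFactorial_eq_zero_iff_lt.2 hxr]
    simp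
  rw [hsub, Finset.sum_Ico_eq_sum_range]
  have hlen : m + 1 - r = (m - r) + 1 := by omega
  rw [hlen, add_pow, Finset.mul_sum]
  refine Finset.sum_congr rfl ?_
  intro j hj
  have hjm : j ≤ m - r := by
    simp only [Finset.mem_range] at hj; omega
  have hkey : m.choose (r + j) * (r + j).descFactorial r
      = m.descFactorial r * (m - r).choose j := by
    have := aux_choose_descFactorial m (r + j) r (by omega) (by omega)
    simpa using this
  have hkeyR : ((m.choose (r + j) : ℝ)) * ((r + j).descFactorial r : ℝ)
      = (m.descFactorial r : ℝ) * ((m - r).choose j : ℝ) := by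
    exact_mod_cast congrArg (fun t : ℕ => (t : ℝ)) hkey
  have hpow : p ^ (r + j) = p ^ r * p ^ j := pow_add p r j
  have hqexp : m - (r + j) = m - r - j := by omega
  calc (m.choose (r + j) : ℝ) * p ^ (r + j) * q ^ (m - (r + j)) * ((r + j).descFactorial r : ℝ)
      = ((m.choose (r + j) : ℝ) * ((r + j).descFactorial r : ℝ)) * (p ^ r * p ^ j)
          * q ^ (m - r - j) := by rw [hpow, hqexp]; ring
    _ = (m.descFactorial r : ℝ) * p ^ r * (p ^ j * q ^ (m - r - j) * ((m - r).choose j : ℝ)) := by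
          rw [hkeyR]; ring

lemma aux_desc1 (i : ℕ) : ((i.descFactorial 1 : ℕ) : ℝ) = (i : ℝ) := by
  simp [Nat.descFactorial]

lemma aux_desc2 (i : ℕ) : ((i.descFactorial 2 : ℕ) : ℝ) = (i : ℝ) * ((i : ℝ) - 1) := by
  rcases i with _ | i
  · simp [Nat.descFactorial]
  · simp only [Nat.descFactorial, Nat.succ_sub_one]
    push_cast
    ring

lemma aux_desc3 (i : ℕ) :
    ((i.descFactorial 3 : ℕ) : ℝ) = (i : ℝ) * ((i : ℝ) - 1) * ((i : ℝ) - 2) := by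
  rcases i with _ | _ | i
  · simp [Nat.descFactorial]
  · simp [Nat.descFactorial]
  · simp only [Nat.descFactorial]
    push_cast
    ring

/-- `(np+2)^2 (1-p)^n ≤ 4`. -/
lemma aux_exp_bound (n : ℕ) (p : ℝ) (hp : 0 < p) (hp1 : p < 1) :
    ((n : ℝ) * p + 2) ^ 2 * (1 - p) ^ n ≤ 4 := by
  set x : ℝ := (n : ℝ) * p with hx
  have hx0 : 0 ≤ x := by positivity
  have h1 : ((n : ℝ) * p + 2) ^ 2 ≤ 4 * Real.exp x := by
    have h2 : x / 2 + 1 ≤ Real.exp (x / 2) := Real.add_one_le_exp _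
    have h3 : (x / 2 + 1) ^ 2 ≤ Real.exp (x / 2) ^ 2 := by
      apply pow_le_pow_left₀ (by linarith) h2
    have h4 : Real.exp (x / 2) ^ 2 = Real.exp x := by
      rw [sq, ← Real.exp_add]
      norm_num
    nlinarith [h3, h4]
  have h5 : (1 - p) ^ n ≤ Real.exp (-x) := by
    have h6 : (1 - p) ≤ Real.exp (-p) := by
      have := Real.add_one_le_exp (-p); linarith
    have h7 : (1 - p) ^ n ≤ Real.exp (-p) ^ n :=
      pow_le_pow_left₀ (by linarith) h6 n
    have h8 : Real.exp (-p) ^ n = Real.exp (-x) := by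
      rw [← Real.exp_nat_mul]
      congr 1
      rw [hx]; ring
    linarith [h7, h8.le, h8.ge]
  have h9 : 0 ≤ (1 - p) ^ n := pow_nonneg (by linarith) n
  calc ((n : ℝ) * p + 2) ^ 2 * (1 - p) ^ n ≤ (4 * Real.exp x) * Real.exp (-x) := by
        apply mul_le_mul h1 h5 h9 (by positivity)
    _ = 4 := by rw [mul_assoc, ← Real.exp_add]; simp

/-- Key estimate: `E[(W - np)^2 / (W + 2)] ≤ 1`. -/
lemma aux_key_sum (n : ℕ) (p : ℝ) (hp : 0 < p) (hp1 : p < 1) (hn : 4 ≤ n) :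
    ∑ j ∈ Finset.range (n + 1),
        (n.choose j : ℝ) * p ^ j * (1 - p) ^ (n - j) *
          (((j : ℝ) - n * p) ^ 2 / ((j : ℝ) + 2)) ≤ 1 := by
  set q : ℝ := 1 - p with hq
  set b : ℝ := (n : ℝ) * p + 2 with hb
  set F : ℕ → ℝ := fun i =>
    ((n + 2).choose i : ℝ) * p ^ i * q ^ (n + 2 - i) * (((i : ℝ) - 1) * ((i : ℝ) - b) ^ 2)
    with hF
  have hq0 : 0 < q := by rw [hq]; linarith
  have hpq : p + q = 1 := by rw [hq]; ring
  -- Claim A : the rescaled sum equals the shifted sum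
  have claimA : ((n : ℝ) + 1) * ((n : ℝ) + 2) * p ^ 2 *
      (∑ j ∈ Finset.range (n + 1),
        (n.choose j : ℝ) * p ^ j * q ^ (n - j) *
          (((j : ℝ) - n * p) ^ 2 / ((j : ℝ) + 2)))
      = ∑ j ∈ Finset.range (n + 1), F (j + 2) := by
    rw [Finset.mul_sum]
    refine Finset.sum_congr rfl ?_
    intro j hj
    have hchoose : (n + 1) * (n + 2) * n.choose j
        = (j + 1) * (j + 2) * (n + 2).choose (j + 2) := by
      have h1 := Nat.add_one_mul_choose_eq n j
      have h2 := Nat.add_one_mul_choose_eq (n + 1) (j + 1)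
      calc (n + 1) * (n + 2) * n.choose j = (n + 2) * ((n + 1) * n.choose j) := by ring
        _ = (n + 2) * ((n + 1).choose (j + 1) * (j + 1)) := by rw [← h1]
        _ = (j + 1) * ((n + 2) * (n + 1).choose (j + 1)) := by ring
        _ = (j + 1) * ((n + 2).choose (j + 2) * (j + 2)) := by rw [← h2]
        _ = (j + 1) * (j + 2) * (n + 2).choose (j + 2) := by ring
    have hchooseR : ((n : ℝ) + 1) * ((n : ℝ) + 2) * (n.choose j : ℝ)
        = ((j : ℝ) + 1) * ((j : ℝ) + 2) * ((n + 2).choose (j + 2) : ℝ) := by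
      exact_mod_cast congrArg (fun t : ℕ => (t : ℝ)) hchoose
    have hexp : n + 2 - (j + 2) = n - j := by omega
    have hj2 : (0 : ℝ) < (j : ℝ) + 2 := by positivity
    simp only [hF]
    rw [hexp]
    have hcast2 : ((j + 2 : ℕ) : ℝ) = (j : ℝ) + 2 := by push_cast; ring
    rw [hcast2, pow_add]
    rw [hb]
    have hinv : ((j : ℝ) + 2) * ((j : ℝ) + 2)⁻¹ = 1 := mul_inv_cancel₀ hj2.ne'
    linear_combination (p ^ j * p ^ 2 * q ^ (n - j) * (((j : ℝ) - (n : ℝ) * p) ^ 2) * ((j : ℝ) + 2)⁻¹) * hchooseR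
      + (p ^ j * p ^ 2 * q ^ (n - j) * (((j : ℝ) - (n : ℝ) * p) ^ 2) * ((j : ℝ) + 1)
        * ((n + 2).choose (j + 2) : ℝ)) * hinv
  -- split the full sum over range (n+3)
  have hFF : ∀ i : ℕ, F (i + 1 + 1) = F (i + 2) := by
    intro i; norm_num
  have hsplit : ∑ i ∈ Finset.range (n + 3), F i
      = (∑ j ∈ Finset.range (n + 1), F (j + 2)) + F 1 + F 0 := by
    rw [show n + 3 = (n + 2) + 1 from rfl, Finset.sum_range_succ' F (n + 2),
      Finset.sum_range_succ' (fun i => F (i + 1)) (n + 1)]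
  have hF1 : F 1 = 0 := by
    simp only [hF]
    norm_num
  have hF0 : F 0 = -(b ^ 2 * q ^ (n + 2)) := by
    simp only [hF]
    norm_num
    ring
  -- moment sums
  have hM0 := aux_sum_desc (n + 2) 0 (by omega) p q
  have hM1 := aux_sum_desc (n + 2) 1 (by omega) p q
  have hM2 := aux_sum_desc (n + 2) 2 (by omega) p q
  have hM3 := aux_sum_desc (n + 2) 3 (by omega) p q
  rw [show n + 2 + 1 = n + 3 from rfl] at hM0 hM1 hM2 hM3
  rw [hpq, one_pow, mul_one] at hM0 hM1 hM2 hM3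
  -- expand F pointwise in terms of descending factorials
  have hgi : ∀ i : ℕ, F i
      = (((n + 2).choose i : ℝ) * p ^ i * q ^ (n + 2 - i) * (i.descFactorial 3 : ℝ))
        + (2 - 2 * b) * (((n + 2).choose i : ℝ) * p ^ i * q ^ (n + 2 - i)
            * (i.descFactorial 2 : ℝ))
        + b ^ 2 * (((n + 2).choose i : ℝ) * p ^ i * q ^ (n + 2 - i)
            * (i.descFactorial 1 : ℝ))
        - b ^ 2 * (((n + 2).choose i : ℝ) * p ^ i * q ^ (n + 2 - i)
            * (i.descFactorial 0 : ℝ)) := by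
    intro i
    simp only [hF]
    rw [aux_desc3 i, aux_desc2 i, aux_desc1 i, Nat.descFactorial_zero]
    push_cast
    ring
  have claimB : ∑ i ∈ Finset.range (n + 3), F i
      = ((n : ℝ) + 2) * ((n : ℝ) + 1) * (n : ℝ) * p ^ 3
        + (2 - 2 * b) * (((n : ℝ) + 2) * ((n : ℝ) + 1)) * p ^ 2
        + b ^ 2 * (((n : ℝ) + 2) * p) - b ^ 2 := by
    calc ∑ i ∈ Finset.range (n + 3), F i
        = ∑ i ∈ Finset.range (n + 3),
            ((((n + 2).choose i : ℝ) * p ^ i * q ^ (n + 2 - i) * (i.descFactorial 3 : ℝ))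
            + (2 - 2 * b) * (((n + 2).choose i : ℝ) * p ^ i * q ^ (n + 2 - i)
                * (i.descFactorial 2 : ℝ))
            + b ^ 2 * (((n + 2).choose i : ℝ) * p ^ i * q ^ (n + 2 - i)
                * (i.descFactorial 1 : ℝ))
            - b ^ 2 * (((n + 2).choose i : ℝ) * p ^ i * q ^ (n + 2 - i)
                * (i.descFactorial 0 : ℝ))) := Finset.sum_congr rfl (fun i _ => hgi i)
      _ = (∑ i ∈ Finset.range (n + 3),
              ((n + 2).choose i : ℝ) * p ^ i * q ^ (n + 2 - i) * (i.descFactorial 3 : ℝ))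
          + (2 - 2 * b) * (∑ i ∈ Finset.range (n + 3),
              ((n + 2).choose i : ℝ) * p ^ i * q ^ (n + 2 - i) * (i.descFactorial 2 : ℝ))
          + b ^ 2 * (∑ i ∈ Finset.range (n + 3),
              ((n + 2).choose i : ℝ) * p ^ i * q ^ (n + 2 - i) * (i.descFactorial 1 : ℝ))
          - b ^ 2 * (∑ i ∈ Finset.range (n + 3),
              ((n + 2).choose i : ℝ) * p ^ i * q ^ (n + 2 - i) * (i.descFactorial 0 : ℝ)) := by
            rw [Finset.sum_sub_distrib, Finset.sum_add_distrib, Finset.sum_add_distrib,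
              ← Finset.mul_sum, ← Finset.mul_sum, ← Finset.mul_sum]
      _ = ((n : ℝ) + 2) * ((n : ℝ) + 1) * (n : ℝ) * p ^ 3
          + (2 - 2 * b) * (((n : ℝ) + 2) * ((n : ℝ) + 1)) * p ^ 2
          + b ^ 2 * (((n : ℝ) + 2) * p) - b ^ 2 := by
            rw [hM0, hM1, hM2, hM3, aux_desc3 (n + 2), aux_desc2 (n + 2), aux_desc1 (n + 2),
              Nat.descFactorial_zero]
            push_cast
            ring
  -- the exponential bound
  have hq2 : b ^ 2 * q ^ (n + 2) ≤ 4 * q ^ 2 := by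
    have h := aux_exp_bound n p hp hp1
    have hqq : q ^ (n + 2) = q ^ n * q ^ 2 := pow_add q n 2
    rw [hqq, hb, hq]
    calc ((n : ℝ) * p + 2) ^ 2 * ((1 - p) ^ n * (1 - p) ^ 2)
        = (((n : ℝ) * p + 2) ^ 2 * (1 - p) ^ n) * (1 - p) ^ 2 := by ring
      _ ≤ 4 * (1 - p) ^ 2 := by
          apply mul_le_mul_of_nonneg_right h (by positivity)
  -- final polynomial inequality
  have hn' : (4 : ℝ) ≤ (n : ℝ) := by exact_mod_cast hn
  have hfinal : (∑ i ∈ Finset.range (n + 3), F i) + b ^ 2 * q ^ (n + 2)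
      ≤ ((n : ℝ) + 1) * ((n : ℝ) + 2) * p ^ 2 := by
    rw [claimB]
    have h4q : (4 : ℝ) * q ^ 2 = 4 * (1 - p) ^ 2 := by rw [hq]
    have key : ((n : ℝ) + 2) * ((n : ℝ) + 1) * (n : ℝ) * p ^ 3
        + (2 - 2 * b) * (((n : ℝ) + 2) * ((n : ℝ) + 1)) * p ^ 2
        + b ^ 2 * (((n : ℝ) + 2) * p) - b ^ 2 + 4 * (1 - p) ^ 2
        ≤ ((n : ℝ) + 1) * ((n : ℝ) + 2) * p ^ 2 := by
      rw [hb]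
      nlinarith [mul_nonneg hp.le (sq_nonneg ((n : ℝ) * p)),
        mul_nonneg hp.le (mul_nonneg (by positivity : (0:ℝ) ≤ (n : ℝ)) hp.le),
        mul_nonneg (sq_nonneg p) (mul_nonneg (by positivity : (0:ℝ) ≤ (n : ℝ)) hp.le),
        sq_nonneg p]
    linarith [hq2, key, h4q.le, h4q.ge]
  -- put everything together
  have hchain : ((n : ℝ) + 1) * ((n : ℝ) + 2) * p ^ 2 *
      (∑ j ∈ Finset.range (n + 1),
        (n.choose j : ℝ) * p ^ j * q ^ (n - j) *
          (((j : ℝ) - n * p) ^ 2 / ((j : ℝ) + 2)))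
      ≤ ((n : ℝ) + 1) * ((n : ℝ) + 2) * p ^ 2 := by
    rw [claimA]
    have : ∑ j ∈ Finset.range (n + 1), F (j + 2)
        = (∑ i ∈ Finset.range (n + 3), F i) + b ^ 2 * q ^ (n + 2) := by
      rw [hsplit, hF1, hF0]; ring
    rw [this]
    exact hfinal
  have hpos : (0 : ℝ) < ((n : ℝ) + 1) * ((n : ℝ) + 2) * p ^ 2 := by positivity
  have h1 : ((n : ℝ) + 1) * ((n : ℝ) + 2) * p ^ 2 *
      (∑ j ∈ Finset.range (n + 1),
        (n.choose j : ℝ) * p ^ j * q ^ (n - j) *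
          (((j : ℝ) - n * p) ^ 2 / ((j : ℝ) + 2)))
      ≤ ((n : ℝ) + 1) * ((n : ℝ) + 2) * p ^ 2 * 1 := by
    rw [mul_one]; exact hchain
  exact (mul_le_mul_iff_right₀ hpos).mp h1

lemma aux_log_bound {y c : ℝ} (hy : 0 < y) (hc : 0 < c) :
    |Real.log (y / c) - (y - c) / c| ≤ (y - c) ^ 2 / (c * y) := by
  have hyc : 0 < y / c := div_pos hy hc
  have h1 : Real.log (y / c) ≤ (y - c) / c := by
    have h := Real.log_le_sub_one_of_pos hyc
    have e : y / c - 1 = (y - c) / c := by field_simp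
    linarith
  have h2 : (y - c) / y ≤ Real.log (y / c) := by
    have h := Real.log_le_sub_one_of_pos (div_pos hc hy)
    have e1 : Real.log (c / y) = -Real.log (y / c) := by
      rw [← Real.log_inv]
      congr 1
      field_simp
    have e2 : c / y - 1 = -((y - c) / y) := by field_simp; ring
    rw [e1, e2] at h
    linarith
  have e3 : (y - c) / c - (y - c) / y = (y - c) ^ 2 / (c * y) := by
    field_simp
  have hnn : 0 ≤ (y - c) ^ 2 / (c * y) := div_nonneg (sq_nonneg _) (mul_pos hc hy).le
  rw [abs_le]
  constructor
  · linarith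
  · linarith

/-- For `W ~ Binomial(n, p)` with `0 < p < 1`, an integer `k ≥ 2`, and `n ≥ 4`:
`|E[log((W + k)/(np + k))]| ≤ 1/(np + k)`. -/
theorem stmt5 (n k : ℕ) (p : ℝ) (hp : 0 < p) (hp1 : p < 1)
    (hk : 2 ≤ k) (hn : 4 ≤ n) :
    |∑ j ∈ Finset.range (n + 1),
        (n.choose j : ℝ) * p ^ j * (1 - p) ^ (n - j) *
          Real.log ((j + k) / (n * p + k))|
      ≤ 1 / (n * p + k) := by
  have hk2 : (2 : ℝ) ≤ (k : ℝ) := by exact_mod_cast hk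
  set c : ℝ := (n : ℝ) * p + (k : ℝ) with hc
  have hnp : 0 < (n : ℝ) * p := by positivity
  have hc0 : 0 < c := by rw [hc]; linarith
  set a : ℕ → ℝ := fun j => (n.choose j : ℝ) * p ^ j * (1 - p) ^ (n - j) with ha
  have ha0 : ∀ j, 0 ≤ a j := by
    intro j
    apply mul_nonneg (mul_nonneg (by positivity) (by positivity))
    exact pow_nonneg (by linarith) _
  -- sum of weights is 1
  have hsum1 : ∑ j ∈ Finset.range (n + 1), a j = 1 := by
    have h0 := aux_sum_desc n 0 (by omega) p (1 - p)
    simp only [Nat.descFactorial_zero, Nat.cast_one, mul_one, pow_zero, Nat.sub_zero] at h0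
    rw [show p + (1 - p) = 1 by ring, one_pow, mul_one] at h0
    simpa [ha] using h0
  -- mean
  have hsumj : ∑ j ∈ Finset.range (n + 1), a j * (j : ℝ) = (n : ℝ) * p := by
    have h1 := aux_sum_desc n 1 (by omega) p (1 - p)
    rw [show p + (1 - p) = 1 by ring, one_pow, mul_one] at h1
    calc ∑ j ∈ Finset.range (n + 1), a j * (j : ℝ)
        = ∑ j ∈ Finset.range (n + 1),
            (n.choose j : ℝ) * p ^ j * (1 - p) ^ (n - j) * ((j.descFactorial 1 : ℕ) : ℝ) := by
          refine Finset.sum_congr rfl fun j _ => ?_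
          rw [aux_desc1 j, ha]
      _ = ((n.descFactorial 1 : ℕ) : ℝ) * p ^ 1 := h1
      _ = (n : ℝ) * p := by rw [aux_desc1 n]; ring
  -- centered first moment vanishes
  have hzero : ∑ j ∈ Finset.range (n + 1), a j * (((j : ℝ) - (n : ℝ) * p) / c) = 0 := by
    have : ∀ j ∈ Finset.range (n + 1), a j * (((j : ℝ) - (n : ℝ) * p) / c)
        = (a j * (j : ℝ) - ((n : ℝ) * p) * a j) / c := by
      intro j _
      field_simp
    rw [Finset.sum_congr rfl this, ← Finset.sum_div, Finset.sum_sub_distrib,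
      ← Finset.mul_sum, hsumj, hsum1, mul_one, sub_self, zero_div]
  -- rewrite the target sum
  have hrw : ∑ j ∈ Finset.range (n + 1), a j * Real.log (((j : ℝ) + (k : ℝ)) / c)
      = ∑ j ∈ Finset.range (n + 1),
          a j * (Real.log (((j : ℝ) + (k : ℝ)) / c) - ((j : ℝ) - (n : ℝ) * p) / c) := by
    rw [eq_comm]
    calc ∑ j ∈ Finset.range (n + 1),
          a j * (Real.log (((j : ℝ) + (k : ℝ)) / c) - ((j : ℝ) - (n : ℝ) * p) / c)
        = ∑ j ∈ Finset.range (n + 1),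
            (a j * Real.log (((j : ℝ) + (k : ℝ)) / c)
              - a j * (((j : ℝ) - (n : ℝ) * p) / c)) := by
          refine Finset.sum_congr rfl fun j _ => ?_
          ring
      _ = (∑ j ∈ Finset.range (n + 1), a j * Real.log (((j : ℝ) + (k : ℝ)) / c))
            - ∑ j ∈ Finset.range (n + 1), a j * (((j : ℝ) - (n : ℝ) * p) / c) :=
          Finset.sum_sub_distrib _ _
      _ = ∑ j ∈ Finset.range (n + 1), a j * Real.log (((j : ℝ) + (k : ℝ)) / c) := by
          rw [hzero, sub_zero]
  -- pointwise bound after taking absolute values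
  have hpoint : ∀ j ∈ Finset.range (n + 1),
      |a j * (Real.log (((j : ℝ) + (k : ℝ)) / c) - ((j : ℝ) - (n : ℝ) * p) / c)|
        ≤ a j * ((((j : ℝ) - (n : ℝ) * p) ^ 2 / ((j : ℝ) + 2)) * (1 / c)) := by
    intro j _
    have hy : (0 : ℝ) < (j : ℝ) + (k : ℝ) := by positivity
    have hlog := aux_log_bound hy hc0
    have hyc : ((j : ℝ) + (k : ℝ)) - c = (j : ℝ) - (n : ℝ) * p := by rw [hc]; ring
    rw [hyc] at hlog
    have hmono : (((j : ℝ) - (n : ℝ) * p) ^ 2) / (c * ((j : ℝ) + (k : ℝ)))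
        ≤ (((j : ℝ) - (n : ℝ) * p) ^ 2) / (c * ((j : ℝ) + 2)) := by
      apply div_le_div_of_nonneg_left (sq_nonneg _) (by positivity)
      have : (j : ℝ) + 2 ≤ (j : ℝ) + (k : ℝ) := by linarith
      exact mul_le_mul_of_nonneg_left this hc0.le
    have heq : (((j : ℝ) - (n : ℝ) * p) ^ 2) / (c * ((j : ℝ) + 2))
        = (((j : ℝ) - (n : ℝ) * p) ^ 2 / ((j : ℝ) + 2)) * (1 / c) := by
      rw [mul_one_div, div_div, mul_comm c]
    rw [abs_mul, abs_of_nonneg (ha0 j)]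
    calc a j * |Real.log (((j : ℝ) + (k : ℝ)) / c) - ((j : ℝ) - (n : ℝ) * p) / c|
        ≤ a j * ((((j : ℝ) - (n : ℝ) * p) ^ 2) / (c * ((j : ℝ) + (k : ℝ)))) :=
          mul_le_mul_of_nonneg_left hlog (ha0 j)
      _ ≤ a j * ((((j : ℝ) - (n : ℝ) * p) ^ 2 / ((j : ℝ) + 2)) * (1 / c)) := by
          rw [← heq]
          exact mul_le_mul_of_nonneg_left hmono (ha0 j)
  -- assemble
  have hmain : |∑ j ∈ Finset.range (n + 1), a j * Real.log (((j : ℝ) + (k : ℝ)) / c)|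
      ≤ 1 / c := by
    rw [hrw]
    calc |∑ j ∈ Finset.range (n + 1),
          a j * (Real.log (((j : ℝ) + (k : ℝ)) / c) - ((j : ℝ) - (n : ℝ) * p) / c)|
        ≤ ∑ j ∈ Finset.range (n + 1),
            |a j * (Real.log (((j : ℝ) + (k : ℝ)) / c) - ((j : ℝ) - (n : ℝ) * p) / c)| :=
          Finset.abs_sum_le_sum_abs _ _
      _ ≤ ∑ j ∈ Finset.range (n + 1),
            a j * ((((j : ℝ) - (n : ℝ) * p) ^ 2 / ((j : ℝ) + 2)) * (1 / c)) :=
          Finset.sum_le_sum hpoint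
      _ = (∑ j ∈ Finset.range (n + 1),
            a j * (((j : ℝ) - (n : ℝ) * p) ^ 2 / ((j : ℝ) + 2))) * (1 / c) := by
          rw [Finset.sum_mul]
          exact Finset.sum_congr rfl fun j _ => by ring
      _ ≤ 1 * (1 / c) := by
          apply mul_le_mul_of_nonneg_right _ (by positivity)
          have := aux_key_sum n p hp hp1 hn
          calc ∑ j ∈ Finset.range (n + 1),
                a j * (((j : ℝ) - (n : ℝ) * p) ^ 2 / ((j : ℝ) + 2))
              = ∑ j ∈ Finset.range (n + 1),
                  (n.choose j : ℝ) * p ^ j * (1 - p) ^ (n - j) *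
                    (((j : ℝ) - (n : ℝ) * p) ^ 2 / ((j : ℝ) + 2)) := by
                refine Finset.sum_congr rfl fun j _ => ?_
                rw [ha]
            _ ≤ 1 := this
      _ = 1 / c := one_mul _
  simpa [ha, hc] using hmain
end

section
/- Suppose W_n − k ~ Binomial(n − k − 1, p) where k is a positive integer with k ≥ p/(1−p) and 0 < p < 1. Then |E[log W_n] − log(np)| ≤ 1/k + k/(np). -/
open Finset Real intervalIntegral

lemma sum_binom' (m : ℕ) (p q : ℝ) :
    ∑ j ∈ Finset.range (m+1), (m.choose j : ℝ) * p ^ j * q ^ (m - j) = (p + q) ^ m := by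
  rw [add_pow]
  exact Finset.sum_congr rfl fun j hj => by ring

lemma sum_binom_mean' (m : ℕ) (p q : ℝ) (hpq : p + q = 1) :
    ∑ j ∈ Finset.range (m+1), (m.choose j : ℝ) * p ^ j * q ^ (m - j) * j = m * p := by
  cases m with
  | zero => simp
  | succ m =>
    rw [Finset.sum_range_succ']
    push_cast
    have h1 : ∀ i ∈ Finset.range (m+1),
        ((m+1).choose (i+1) : ℝ) * p ^ (i+1) * q ^ (m - i) * ((i:ℝ)+1)
        = ((m:ℝ)+1) * p * ((m.choose i : ℝ) * p ^ i * q ^ (m - i)) := by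
      intro i hi
      have h := Nat.add_one_mul_choose_eq m i
      have hc : ((m:ℝ)+1) * (m.choose i : ℝ) = ((m+1).choose (i+1) : ℝ) * ((i:ℝ)+1) := by
        exact_mod_cast congrArg (Nat.cast (R := ℝ)) h
      linear_combination (-(p ^ (i+1) * q ^ (m - i))) * hc
    rw [Finset.sum_congr rfl h1, ← Finset.mul_sum, sum_binom' m p q, hpq]
    simp

lemma sum_binom_inv' (m k : ℕ) (p : ℝ) (hp : 0 < p) (hp1 : p ≤ 1) (hk : 1 ≤ k) :
    ∑ j ∈ Finset.range (m+1), (m.choose j : ℝ) * p ^ j * (1-p) ^ (m - j) / ((j:ℝ) + k)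
      ≤ 1 / (p * ((m:ℝ) + k)) := by
  set q : ℝ := 1 - p with hq
  have hq0 : 0 ≤ q := by rw [hq]; linarith
  have hk1 : (1:ℝ) ≤ (k:ℝ) := by exact_mod_cast hk
  have hmk : (0:ℝ) < (m:ℝ) + k := by linarith [Nat.cast_nonneg (α := ℝ) m]
  -- each term as an integral
  have hterm : ∀ j ∈ Finset.range (m+1),
      (m.choose j : ℝ) * p ^ j * q ^ (m - j) / ((j:ℝ) + k)
      = ∫ t in (0:ℝ)..1, (m.choose j : ℝ) * p ^ j * q ^ (m - j) * t ^ (j + k - 1) := by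
    intro j _
    rw [intervalIntegral.integral_const_mul, integral_pow]
    have h2 : j + k - 1 + 1 = j + k := by omega
    have h3 : ((j + k - 1 : ℕ) : ℝ) + 1 = (j:ℝ) + (k:ℝ) := by
      exact_mod_cast congrArg (Nat.cast (R := ℝ)) h2
    rw [h3, zero_pow (by omega : j + k - 1 + 1 ≠ 0), one_pow]
    ring
  rw [Finset.sum_congr rfl hterm, ← intervalIntegral.integral_finset_sum]
  · -- bound the integral
    have hle : ∫ t in (0:ℝ)..1,
          (∑ j ∈ Finset.range (m+1), (m.choose j : ℝ) * p ^ j * q ^ (m - j) * t ^ (j + k - 1))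
        ≤ ∫ t in (0:ℝ)..1, (q + p * t) ^ (m + k - 1) := by
      apply intervalIntegral.integral_mono_on zero_le_one
      · exact (continuous_finset_sum _ fun j _ =>
          continuous_const.mul (continuous_pow _)).intervalIntegrable _ _
      · exact ((continuous_const.add (continuous_const.mul continuous_id)).pow
          _).intervalIntegrable _ _
      · intro t ht
        obtain ⟨ht0, ht1⟩ := ht
        have key : ∀ j ∈ Finset.range (m+1),
            (m.choose j : ℝ) * p ^ j * q ^ (m - j) * t ^ (j + k - 1)
            = (m.choose j : ℝ) * (p * t) ^ j * q ^ (m - j) * t ^ (k - 1) := by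
          intro j _
          have : j + k - 1 = j + (k - 1) := by omega
          rw [this, pow_add, mul_pow]
          ring
        rw [Finset.sum_congr rfl key]
        have hsum : ∑ j ∈ Finset.range (m+1),
            (m.choose j : ℝ) * (p * t) ^ j * q ^ (m - j) * t ^ (k - 1)
            = (p * t + q) ^ m * t ^ (k - 1) := by
          rw [← Finset.sum_mul, sum_binom']
        rw [hsum]
        have h1 : t ^ (k-1) ≤ (q + p * t) ^ (k-1) := by
          apply pow_le_pow_left₀ ht0
          nlinarith
        have h2 : (0:ℝ) ≤ p * t + q := by positivity
        have h3 : (p * t + q) ^ m * t ^ (k-1) ≤ (p * t + q) ^ m * (q + p * t) ^ (k-1) := by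
          apply mul_le_mul_of_nonneg_left h1 (by positivity)
        calc (p * t + q) ^ m * t ^ (k-1) ≤ (p * t + q) ^ m * (q + p * t) ^ (k-1) := h3
          _ = (q + p * t) ^ (m + (k-1)) := by rw [pow_add]; ring
          _ = (q + p * t) ^ (m + k - 1) := by congr 1; omega
    refine hle.trans ?_
    -- compute the integral via antiderivative
    have hder : ∀ t ∈ Set.uIcc (0:ℝ) 1,
        HasDerivAt (fun t => (q + p * t) ^ (m + k) / (p * (m + k)))
          ((q + p * t) ^ (m + k - 1)) t := by
      intro t _
      have h1 : HasDerivAt (fun t : ℝ => q + p * t) p t := by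
        simpa using ((hasDerivAt_id t).const_mul p).const_add q
      have h2 := (h1.pow (m + k)).div_const (p * ((m:ℝ) + k))
      convert h2 using 1
      case e'_4 => rfl
      case e'_5 => rfl
      case e'_8 => rfl
      have : (m + k : ℕ) - 1 = m + k - 1 := rfl
      have hc : ((m + k : ℕ) : ℝ) = (m:ℝ) + k := by push_cast; ring
      rw [hc]
      field_simp
    rw [intervalIntegral.integral_eq_sub_of_hasDerivAt hder
        (((continuous_const.add (continuous_const.mul continuous_id)).pow
          _).intervalIntegrable _ _)]
    have hq1 : q + p * 1 = 1 := by rw [hq]; ring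
    rw [hq1]
    have : (0:ℝ) ≤ (q + p * 0) ^ (m + k) := by positivity
    have hpk : (0:ℝ) < p * ((m:ℝ) + k) := by positivity
    rw [one_pow, div_sub_div_same, div_le_div_iff₀ hpk hpk]
    nlinarith
  · intro j _
    exact (continuous_const.mul (continuous_pow _)).intervalIntegrable _ _

/-- If `W_n − k ~ Binomial(n − k − 1, p)` with `k ≥ p/(1−p)` and `0 < p < 1`,
then `|E[log W_n] − log(np)| ≤ 1/k + k/(np)`. -/
theorem stmt6 (n k : ℕ) (p : ℝ) (hp : 0 < p) (hp1 : p < 1)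
    (hk : 1 ≤ k) (hkn : k + 1 < n) (hkp : p / (1 - p) ≤ (k : ℝ)) :
    |(∑ j ∈ Finset.range (n - k),
        ((n - k - 1).choose j : ℝ) * p ^ j * (1 - p) ^ (n - k - 1 - j) *
          Real.log (j + k)) - Real.log (n * p)|
      ≤ 1 / k + k / (n * p) := by
  have hsum_inv := sum_binom_inv' (n - k - 1) k p hp hp1.le hk
  set m := n - k - 1 with hm
  have hrange : n - k = m + 1 := by omega
  rw [hrange]
  set q : ℝ := 1 - p with hq
  have hq0 : 0 ≤ q := by rw [hq]; linarith
  have hpq : p + q = 1 := by rw [hq]; ring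
  have hk1 : (1:ℝ) ≤ (k:ℝ) := by exact_mod_cast hk
  have hncast : (n:ℝ) = (m:ℝ) + k + 1 := by
    have : m + k + 1 = n := by omega
    exact_mod_cast (congrArg (Nat.cast (R := ℝ)) this).symm
  have hnp : (0:ℝ) < n * p := by
    have : (0:ℝ) < (n:ℝ) := by rw [hncast]; linarith [Nat.cast_nonneg (α := ℝ) m]
    positivity
  have hmk : (0:ℝ) < (m:ℝ) + k := by linarith [Nat.cast_nonneg (α := ℝ) m]
  have hc0 : ∀ j ∈ Finset.range (m+1), 0 ≤ (m.choose j : ℝ) * p ^ j * q ^ (m - j) := by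
    intro j _; positivity
  have hsum1 : ∑ j ∈ Finset.range (m+1), (m.choose j : ℝ) * p ^ j * q ^ (m - j) = 1 := by
    rw [sum_binom' m p q, hpq, one_pow]
  have hmean := sum_binom_mean' m p q hpq
  have hjk : ∀ j : ℕ, (0:ℝ) < (j:ℝ) + k := fun j => by
    linarith [Nat.cast_nonneg (α := ℝ) j]
  -- expectation of W
  have hEW : ∑ j ∈ Finset.range (m+1),
      ((m.choose j : ℝ) * p ^ j * q ^ (m - j)) * ((j:ℝ) + k) = m * p + k := by
    have : ∀ j ∈ Finset.range (m+1),
        ((m.choose j : ℝ) * p ^ j * q ^ (m - j)) * ((j:ℝ) + k)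
        = (m.choose j : ℝ) * p ^ j * q ^ (m - j) * j
          + ((m.choose j : ℝ) * p ^ j * q ^ (m - j)) * k := by
      intro j _; ring
    rw [Finset.sum_congr rfl this, Finset.sum_add_distrib, hmean, ← Finset.sum_mul, hsum1,
      one_mul]
  have hmpk : (0:ℝ) < m * p + k := by
    have : (0:ℝ) ≤ (m:ℝ) * p := by positivity
    linarith
  -- Jensen upper bound
  have hJensen : ∑ j ∈ Finset.range (m+1),
      (m.choose j : ℝ) * p ^ j * q ^ (m - j) * Real.log ((j:ℝ) + k)
      ≤ Real.log (m * p + k) := by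
    have h := (strictConcaveOn_log_Ioi.concaveOn).le_map_sum
      (t := Finset.range (m+1))
      (w := fun j => (m.choose j : ℝ) * p ^ j * q ^ (m - j))
      (p := fun j => (j:ℝ) + k) hc0 hsum1 (fun j _ => Set.mem_Ioi.mpr (hjk j))
    simp only [smul_eq_mul] at h
    rw [hEW] at h
    exact h
  -- upper direction
  have hupper : (∑ j ∈ Finset.range (m+1),
      (m.choose j : ℝ) * p ^ j * q ^ (m - j) * Real.log ((j:ℝ) + k))
      - Real.log (n * p) ≤ k / (n * p) := by
    have h1 : Real.log (m * p + k) - Real.log (n * p)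
        ≤ (m * p + k) / (n * p) - 1 := by
      have hx : (0:ℝ) < (m * p + k) / (n * p) := by positivity
      have h2 := Real.log_le_sub_one_of_pos hx
      rwa [Real.log_div hmpk.ne' hnp.ne'] at h2
    have h3 : (m * p + k) / (n * p) - 1 ≤ k / (n * p) := by
      rw [div_sub_one hnp.ne', div_le_div_iff_of_pos_right hnp]
      have : (m:ℝ) * p ≤ n * p := by
        have : (m:ℝ) ≤ n := by rw [hncast]; linarith
        nlinarith
      linarith
    linarith
  -- lower direction
  have hptwise : ∀ j ∈ Finset.range (m+1),
      (m.choose j : ℝ) * p ^ j * q ^ (m - j) * (Real.log (n * p) - Real.log ((j:ℝ) + k))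
      ≤ (n * p) * ((m.choose j : ℝ) * p ^ j * q ^ (m - j) / ((j:ℝ) + k))
        - (m.choose j : ℝ) * p ^ j * q ^ (m - j) := by
    intro j hj
    have hx : (0:ℝ) < (n * p) / ((j:ℝ) + k) := by positivity
    have h2 := Real.log_le_sub_one_of_pos hx
    rw [Real.log_div hnp.ne' (hjk j).ne'] at h2
    have hc := hc0 j hj
    have h3 := mul_le_mul_of_nonneg_left h2 hc
    calc (m.choose j : ℝ) * p ^ j * q ^ (m - j) * (Real.log (n * p) - Real.log ((j:ℝ) + k))
        ≤ (m.choose j : ℝ) * p ^ j * q ^ (m - j) * ((n * p) / ((j:ℝ) + k) - 1) := h3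
      _ = (n * p) * ((m.choose j : ℝ) * p ^ j * q ^ (m - j) / ((j:ℝ) + k))
          - (m.choose j : ℝ) * p ^ j * q ^ (m - j) := by ring
  have hlower : Real.log (n * p) - (∑ j ∈ Finset.range (m+1),
      (m.choose j : ℝ) * p ^ j * q ^ (m - j) * Real.log ((j:ℝ) + k)) ≤ 1 / k := by
    have heq : Real.log (n * p) - (∑ j ∈ Finset.range (m+1),
        (m.choose j : ℝ) * p ^ j * q ^ (m - j) * Real.log ((j:ℝ) + k))
        = ∑ j ∈ Finset.range (m+1), (m.choose j : ℝ) * p ^ j * q ^ (m - j)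
            * (Real.log (n * p) - Real.log ((j:ℝ) + k)) := by
      rw [Finset.sum_congr rfl (fun j _ => mul_sub ((m.choose j : ℝ) * p ^ j * q ^ (m - j))
        (Real.log (n * p)) (Real.log ((j:ℝ) + k))), Finset.sum_sub_distrib,
        ← Finset.sum_mul, hsum1, one_mul]
    rw [heq]
    have hstep : ∑ j ∈ Finset.range (m+1), (m.choose j : ℝ) * p ^ j * q ^ (m - j)
          * (Real.log (n * p) - Real.log ((j:ℝ) + k))
        ≤ (n * p) * ∑ j ∈ Finset.range (m+1),
            (m.choose j : ℝ) * p ^ j * q ^ (m - j) / ((j:ℝ) + k) - 1 := by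
      calc ∑ j ∈ Finset.range (m+1), (m.choose j : ℝ) * p ^ j * q ^ (m - j)
            * (Real.log (n * p) - Real.log ((j:ℝ) + k))
          ≤ ∑ j ∈ Finset.range (m+1), ((n * p) * ((m.choose j : ℝ) * p ^ j * q ^ (m - j)
              / ((j:ℝ) + k)) - (m.choose j : ℝ) * p ^ j * q ^ (m - j)) :=
            Finset.sum_le_sum hptwise
        _ = (n * p) * ∑ j ∈ Finset.range (m+1),
              (m.choose j : ℝ) * p ^ j * q ^ (m - j) / ((j:ℝ) + k) - 1 := by
            rw [Finset.sum_sub_distrib, ← Finset.mul_sum, hsum1]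
    have hfin : (n * p) * ∑ j ∈ Finset.range (m+1),
        (m.choose j : ℝ) * p ^ j * q ^ (m - j) / ((j:ℝ) + k) - 1 ≤ 1 / k := by
      have h4 : (n * p) * ∑ j ∈ Finset.range (m+1),
          (m.choose j : ℝ) * p ^ j * q ^ (m - j) / ((j:ℝ) + k)
          ≤ (n * p) * (1 / (p * ((m:ℝ) + k))) :=
        mul_le_mul_of_nonneg_left hsum_inv hnp.le
      have h5 : (n * p) * (1 / (p * ((m:ℝ) + k))) = (n:ℝ) / ((m:ℝ) + k) := by
        field_simp
      have h6 : (n:ℝ) / ((m:ℝ) + k) - 1 = 1 / ((m:ℝ) + k) := by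
        rw [hncast]; field_simp; ring
      have h7 : 1 / ((m:ℝ) + k) ≤ 1 / (k:ℝ) := by
        apply one_div_le_one_div_of_le (by linarith)
        linarith [Nat.cast_nonneg (α := ℝ) m]
      linarith [h4, h5 ▸ h4]
    linarith
  have hk0 : (0:ℝ) < 1 / (k:ℝ) := by positivity
  have hknp : (0:ℝ) ≤ (k:ℝ) / (n * p) := by positivity
  rw [abs_sub_le_iff]
  constructor
  · linarith
  · linarith
end

section
/- Suppose W_n − k ~ Binomial(n − k − 1, p) where k ≥ p/(1−p) and 0 < p < 1, and let ψ be the digamma function. Then |E[ψ(W_n)] − log(np)| ≤ 2/k + k/(np). -/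
open Finset Real Set Filter Topology



noncomputable def digamma (x : ℝ) : ℝ := deriv (fun y => Real.log (Real.Gamma y)) x

lemma diff_logGamma {x : ℝ} (hx : 0 < x) :
    DifferentiableAt ℝ (fun y => Real.log (Real.Gamma y)) x := by
  refine (Real.differentiableAt_Gamma ?_).log (Real.Gamma_pos_of_pos hx).ne'
  exact fun m => ne_of_gt (lt_of_le_of_lt (neg_nonpos.mpr m.cast_nonneg) hx)

lemma logGamma_rec {x : ℝ} (hx : 0 < x) :
    Real.log (Real.Gamma (x + 1)) = Real.log (Real.Gamma x) + Real.log x := by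
  rw [Real.Gamma_add_one hx.ne', Real.log_mul hx.ne' (Real.Gamma_pos_of_pos hx).ne', add_comm]

lemma digamma_rec {x : ℝ} (hx : 0 < x) : digamma (x + 1) = digamma x + 1 / x := by
  unfold digamma
  rw [← deriv_comp_add_const, one_div, ← Real.deriv_log,
    ← deriv_add (diff_logGamma hx) (Real.differentiableAt_log hx.ne')]
  apply Filter.EventuallyEq.deriv_eq
  filter_upwards [eventually_gt_nhds hx] with y hy
  exact logGamma_rec hy

lemma digamma_le_log {x : ℝ} (hx : 0 < x) : digamma x ≤ Real.log x := by
  have hc : ConvexOn ℝ (Ioi 0) (fun y => Real.log (Real.Gamma y)) := Real.convexOn_log_Gamma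
  have h := hc.deriv_le_slope (mem_Ioi.mpr hx) (mem_Ioi.mpr (by linarith : (0:ℝ) < x + 1))
    (lt_add_one x) (diff_logGamma hx)
  rw [slope_def_field, logGamma_rec hx] at h
  simpa [digamma] using h

lemma log_sub_inv_le_digamma {x : ℝ} (hx : 0 < x) : Real.log x - 1 / x ≤ digamma x := by
  have hc : ConvexOn ℝ (Ioi 0) (fun y => Real.log (Real.Gamma y)) := Real.convexOn_log_Gamma
  have h := hc.slope_le_deriv (mem_Ioi.mpr hx) (mem_Ioi.mpr (by linarith : (0:ℝ) < x + 1))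
    (lt_add_one x) (diff_logGamma (by linarith : (0:ℝ) < x + 1))
  rw [slope_def_field, logGamma_rec hx] at h
  have h' : Real.log x ≤ digamma (x + 1) := by simpa [digamma] using h
  rw [digamma_rec hx] at h'
  linarith


lemma log_one_add_ge {t : ℝ} (ht : 0 ≤ t) : t - t^2/2 ≤ Real.log (1 + t) := by
  set g : ℝ → ℝ := fun s => Real.log (1+s) - (s - s^2/2) with hg
  have key : ∀ y : ℝ, 0 ≤ y → HasDerivAt g (1/(1+y) - (1-y)) y := by
    intro y hy
    have h1 : HasDerivAt (fun s : ℝ => 1 + s) 1 y := (hasDerivAt_id y).const_add 1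
    have h2 : HasDerivAt (fun s : ℝ => Real.log (1+s)) (1/(1+y)) y := by
      simpa [Function.comp_def] using (Real.hasDerivAt_log (by linarith : (1:ℝ)+y ≠ 0)).comp y h1
    have h3 : HasDerivAt (fun s : ℝ => s - s^2/2) (1 - y) y := by
      have := (hasDerivAt_id y).sub ((hasDerivAt_pow 2 y).div_const 2)
      simpa [Pi.sub_def] using this
    exact h2.sub h3
  have mono : MonotoneOn g (Set.Ici 0) := by
    apply monotoneOn_of_deriv_nonneg (convex_Ici 0)
    · exact fun y hy => ((key y hy).differentiableAt).continuousAt.continuousWithinAt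
    · intro y hy
      rw [interior_Ici, Set.mem_Ioi] at hy
      exact ((key y (le_of_lt hy)).differentiableAt).differentiableWithinAt
    · intro y hy
      rw [interior_Ici, Set.mem_Ioi] at hy
      rw [(key y (le_of_lt hy)).deriv]
      have h1 : (0:ℝ) < 1 + y := by linarith
      have : 1/(1+y) - (1-y) = y^2/(1+y) := by field_simp; ring
      rw [this]; positivity
  have h0 : g 0 ≤ g t := mono (le_refl (0:ℝ)) ht ht
  simp only [hg] at h0
  norm_num at h0
  linarith

lemma log_le_half_sub_inv {u : ℝ} (hu : 1 ≤ u) : Real.log u ≤ (u - u⁻¹)/2 := by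
  set g : ℝ → ℝ := fun s => (s - s⁻¹)/2 - Real.log s with hg
  have key : ∀ y : ℝ, 1 ≤ y → HasDerivAt g ((1 + y⁻¹^2)/2 - y⁻¹) y := by
    intro y hy
    have hy0 : y ≠ 0 := by positivity
    have h1 : HasDerivAt (fun s : ℝ => (s - s⁻¹)/2) ((1 + y⁻¹^2)/2) y := by
      have := ((hasDerivAt_id y).sub (hasDerivAt_inv hy0)).div_const 2
      simpa [sub_neg_eq_add, inv_pow] using this
    have h2 : HasDerivAt Real.log y⁻¹ y := by
      simpa [one_div] using Real.hasDerivAt_log hy0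
    exact h1.sub h2
  have mono : MonotoneOn g (Set.Ici 1) := by
    apply monotoneOn_of_deriv_nonneg (convex_Ici 1)
    · exact fun y hy => ((key y hy).differentiableAt).continuousAt.continuousWithinAt
    · intro y hy
      rw [interior_Ici, Set.mem_Ioi] at hy
      exact ((key y (le_of_lt hy)).differentiableAt).differentiableWithinAt
    · intro y hy
      rw [interior_Ici, Set.mem_Ioi] at hy
      rw [(key y (le_of_lt hy)).deriv]
      have h1 : (0:ℝ) < y := by linarith
      have : (1 + y⁻¹^2)/2 - y⁻¹ = (y-1)^2/(2*y^2) := by field_simp; ring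
      rw [this]; positivity
  have h0 : g 1 ≤ g u := mono (le_refl (1:ℝ)) hu hu
  simp only [hg] at h0
  norm_num at h0
  linarith

lemma key_log_lb {x μ κ : ℝ} (hκ : 0 < κ) (hx : κ ≤ x) (hμ : κ ≤ μ) :
    Real.log μ + (x - μ)/μ - (x-μ)^2/(2*κ*μ) ≤ Real.log x := by
  have hx0 : 0 < x := lt_of_lt_of_le hκ hx
  have hμ0 : 0 < μ := lt_of_lt_of_le hκ hμ
  rcases le_or_gt μ x with h | h
  · set t := (x - μ)/μ with hts
    have ht : 0 ≤ t := div_nonneg (by linarith) hμ0.le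
    have h1 : Real.log (1+t) = Real.log x - Real.log μ := by
      rw [hts, show 1 + (x-μ)/μ = x/μ by rw [one_add_div hμ0.ne']; ring_nf,
        Real.log_div hx0.ne' hμ0.ne']
    have h2 := log_one_add_ge ht
    have h3 : t^2/2 = (x-μ)^2/(2*μ^2) := by rw [hts, div_pow, div_div, mul_comm]
    have h4 : (x-μ)^2/(2*μ^2) ≤ (x-μ)^2/(2*κ*μ) := by
      apply div_le_div_of_nonneg_left (by positivity) (by positivity)
      nlinarith
    linarith [h2, h3, h4, hts]
  · -- x < μ
    set u := μ / x with hus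
    have hu : 1 ≤ u := by rw [hus]; rw [le_div_iff₀ hx0]; linarith
    have h1 : Real.log μ - Real.log x = Real.log u := by
      rw [hus, Real.log_div hμ0.ne' hx0.ne']
    have h2 := log_le_half_sub_inv hu
    have h3 : (u - u⁻¹)/2 = (μ - x)/μ + (μ-x)^2/(2*x*μ) := by
      rw [hus]; field_simp; ring
    have h4 : (μ-x)^2/(2*x*μ) ≤ (x-μ)^2/(2*κ*μ) := by
      rw [show (μ-x)^2 = (x-μ)^2 by ring]
      apply div_le_div_of_nonneg_left (by positivity) (by positivity)
      nlinarith
    have h5 : Real.log μ - Real.log x ≤ (μ - x)/μ + (x-μ)^2/(2*κ*μ) := by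
      rw [h1]; linarith
    have h6 : (x - μ)/μ = -((μ-x)/μ) := by ring
    linarith [h5]


variable {p : ℝ}

lemma bern_eval (m j : ℕ) (p : ℝ) :
    (bernsteinPolynomial ℝ m j).eval p = (m.choose j : ℝ) * p ^ j * (1 - p) ^ (m - j) := by
  simp [bernsteinPolynomial]

lemma binom_S0 (m : ℕ) (p : ℝ) :
    ∑ j ∈ range (m+1), (m.choose j : ℝ) * p ^ j * (1 - p) ^ (m - j) = 1 := by
  have := congrArg (Polynomial.eval p) (bernsteinPolynomial.sum ℝ m)
  simpa [Polynomial.eval_finset_sum, bern_eval] using this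

lemma binom_S1 (m : ℕ) (p : ℝ) :
    ∑ j ∈ range (m+1), (j : ℝ) * ((m.choose j : ℝ) * p ^ j * (1 - p) ^ (m - j)) = m * p := by
  have := congrArg (Polynomial.eval p) (bernsteinPolynomial.sum_smul ℝ m)
  simpa [Polynomial.eval_finset_sum, bern_eval, nsmul_eq_mul] using this

lemma binom_var (m : ℕ) (p : ℝ) :
    ∑ j ∈ range (m+1), ((m : ℝ) * p - j)^2 * ((m.choose j : ℝ) * p ^ j * (1 - p) ^ (m - j))
      = m * p * (1 - p) := by
  have := congrArg (Polynomial.eval p) (bernsteinPolynomial.variance ℝ m)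
  simpa [Polynomial.eval_finset_sum, bern_eval, nsmul_eq_mul] using this


/-- If `W_n − k ~ Binomial(n − k − 1, p)` with `k ≥ p/(1−p)` and `0 < p < 1`,
then `|E[ψ(W_n)] − log(np)| ≤ 2/k + k/(np)`. -/
theorem stmt7 (n k : ℕ) (p : ℝ) (hp : 0 < p) (hp1 : p < 1)
    (hk : 1 ≤ k) (hkn : k + 1 < n) (hkp : p / (1 - p) ≤ (k : ℝ)) :
    |(∑ j ∈ Finset.range (n - k),
        ((n - k - 1).choose j : ℝ) * p ^ j * (1 - p) ^ (n - k - 1 - j) *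
          digamma (j + k)) - Real.log (n * p)|
      ≤ 2 / k + k / (n * p) := by
  set m := n - k - 1 with hm
  have hrange : n - k = m + 1 := by omega
  rw [hrange]
  set K := (k : ℝ) with hKdef
  have hK1 : (1:ℝ) ≤ K := by rw [hKdef]; exact_mod_cast hk
  have hK0 : (0:ℝ) < K := by linarith
  have hq : 0 < 1 - p := by linarith
  set w : ℕ → ℝ := fun j => (m.choose j : ℝ) * p ^ j * (1 - p) ^ (m - j) with hw
  have hw0 : ∀ j, 0 ≤ w j := fun j => by
    simp only [hw]; positivity
  have hS0 : ∑ j ∈ range (m+1), w j = 1 := binom_S0 m p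
  have hS1 : ∑ j ∈ range (m+1), (j : ℝ) * w j = m * p := binom_S1 m p
  have hVar : ∑ j ∈ range (m+1), ((m : ℝ) * p - j)^2 * w j = m * p * (1 - p) :=
    binom_var m p
  set μ := (m:ℝ) * p + K with hμdef
  have hmp0 : 0 ≤ (m:ℝ) * p := by positivity
  have hμK : K ≤ μ := by rw [hμdef]; linarith
  have hμ0 : 0 < μ := lt_of_lt_of_le hK0 hμK
  -- first moment
  have hE1 : ∑ j ∈ range (m+1), w j * ((j:ℝ) + K) = μ := by
    have expand : ∀ j ∈ range (m+1), w j * ((j:ℝ) + K) = (j:ℝ) * w j + K * w j :=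
      fun j _ => by ring
    rw [Finset.sum_congr rfl expand, Finset.sum_add_distrib, ← Finset.mul_sum, hS0, hS1,
      mul_one, hμdef]
  -- variance
  have hE2 : ∑ j ∈ range (m+1), w j * ((j:ℝ) + K - μ)^2 = (m:ℝ) * p * (1-p) := by
    have expand : ∀ j ∈ range (m+1), w j * ((j:ℝ) + K - μ)^2 = ((m:ℝ)*p - j)^2 * w j :=
      fun j _ => by rw [hμdef]; ring
    rw [Finset.sum_congr rfl expand, hVar]
  -- linear combination identity
  have lin : ∀ A C : ℝ, ∑ j ∈ range (m+1),
      w j * (A + ((j:ℝ)+K-μ)/μ + C * ((j:ℝ)+K-μ)^2) = A + C * ((m:ℝ)*p*(1-p)) := by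
    intro A C
    have expand : ∀ j ∈ range (m+1), w j * (A + ((j:ℝ)+K-μ)/μ + C * ((j:ℝ)+K-μ)^2)
        = A * w j + (w j * ((j:ℝ)+K)) * μ⁻¹ - w j + C * (w j * ((j:ℝ)+K-μ)^2) := by
      intro j _
      field_simp
      ring
    rw [Finset.sum_congr rfl expand]
    simp only [Finset.sum_add_distrib, Finset.sum_sub_distrib, ← Finset.mul_sum,
      ← Finset.sum_mul, hS0, hE1, hE2]
    rw [mul_inv_cancel₀ hμ0.ne']
    ring
  -- pointwise facts
  have hxK : ∀ j : ℕ, K ≤ (j:ℝ) + K := fun j => le_add_of_nonneg_left (j.cast_nonneg)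
  have hx0 : ∀ j : ℕ, (0:ℝ) < (j:ℝ) + K := fun j => lt_of_lt_of_le hK0 (hxK j)
  have tangent : ∀ x : ℝ, 0 < x → Real.log x ≤ Real.log μ + (x-μ)/μ := by
    intro x hx
    have h := Real.log_le_sub_one_of_pos (show 0 < x/μ by positivity)
    rw [Real.log_div hx.ne' hμ0.ne'] at h
    have h2 : x/μ - 1 = (x-μ)/μ := by field_simp
    linarith
  -- the expectation
  set E := ∑ j ∈ range (m+1), w j * digamma ((j:ℝ) + K) with hE
  have hEeq : ∑ j ∈ range (m+1),
      (m.choose j : ℝ) * p ^ j * (1 - p) ^ (m - j) * digamma ((j:ℝ) + K) = E :=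
    Finset.sum_congr rfl (fun j _ => rfl)
  -- upper bound
  have Eup : E ≤ Real.log μ := by
    have pt : ∀ j ∈ range (m+1), w j * digamma ((j:ℝ) + K)
        ≤ w j * (Real.log μ + ((j:ℝ)+K-μ)/μ + 0 * ((j:ℝ)+K-μ)^2) := by
      intro j _
      apply mul_le_mul_of_nonneg_left _ (hw0 j)
      have h1 := digamma_le_log (hx0 j)
      have h2 := tangent ((j:ℝ)+K) (hx0 j)
      linarith
    have := Finset.sum_le_sum pt
    rw [lin (Real.log μ) 0] at this
    linarith
  -- lower bound
  have Elow : Real.log μ - 1/K - (1/(2*K*μ)) * ((m:ℝ)*p*(1-p)) ≤ E := by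
    have pt : ∀ j ∈ range (m+1),
        w j * ((Real.log μ - 1/K) + ((j:ℝ)+K-μ)/μ + (-(1/(2*K*μ))) * ((j:ℝ)+K-μ)^2)
          ≤ w j * digamma ((j:ℝ) + K) := by
      intro j _
      apply mul_le_mul_of_nonneg_left _ (hw0 j)
      have h1 := log_sub_inv_le_digamma (hx0 j)
      have h2 := key_log_lb hK0 (hxK j) hμK (x := (j:ℝ)+K)
      have h3 : 1/((j:ℝ)+K) ≤ 1/K := by
        apply one_div_le_one_div_of_le hK0 (hxK j)
      have h4 : (-(1/(2*K*μ))) * ((j:ℝ)+K-μ)^2 = -(((j:ℝ)+K-μ)^2/(2*K*μ)) := by ring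
      linarith
    have := Finset.sum_le_sum pt
    rw [lin (Real.log μ - 1/K) (-(1/(2*K*μ)))] at this
    linarith
  have hVle : (m:ℝ)*p*(1-p) ≤ μ := by nlinarith
  have hhalf : (1/(2*K*μ)) * ((m:ℝ)*p*(1-p)) ≤ 1/(2*K) := by
    have h2 : (1/(2*K*μ))*((m:ℝ)*p*(1-p)) ≤ (1/(2*K*μ))*μ :=
      mul_le_mul_of_nonneg_left hVle (by positivity)
    have h3 : (1/(2*K*μ))*μ = 1/(2*K) := by field_simp
    linarith
  -- relate μ and n*p
  have hm' : (m:ℝ) = (n:ℝ) - (K + 1) := by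
    have h1 : m = n - (k+1) := by omega
    rw [h1, Nat.cast_sub (by omega), hKdef]
    push_cast
    ring
  have hN0 : (0:ℝ) < (n:ℝ) * p := by
    have hn0 : (0:ℝ) < (n:ℝ) := by exact_mod_cast (by omega : 0 < n)
    exact mul_pos hn0 hp
  have hkp' : (K+1)*p ≤ K := by
    rw [div_le_iff₀ hq] at hkp
    have hx : K * (1 - p) = K - K * p := by ring
    have hy : (K+1)*p = K*p + p := by ring
    linarith
  have hNμ : (n:ℝ)*p ≤ μ := by
    rw [hμdef, hm']
    have hx : ((n:ℝ) - (K+1))*p = (n:ℝ)*p - (K+1)*p := by ring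
    linarith
  have hμN : μ ≤ (n:ℝ)*p + K := by
    rw [hμdef, hm']
    have hx : ((n:ℝ) - (K+1))*p = (n:ℝ)*p - (K+1)*p := by ring
    have hy : 0 ≤ (K+1)*p := by positivity
    linarith
  have logup : Real.log μ ≤ Real.log ((n:ℝ)*p) + K/((n:ℝ)*p) := by
    have h := Real.log_le_sub_one_of_pos (show 0 < μ/((n:ℝ)*p) by positivity)
    rw [Real.log_div hμ0.ne' hN0.ne'] at h
    have h2 : μ/((n:ℝ)*p) - 1 = (μ - (n:ℝ)*p)/((n:ℝ)*p) := by rw [sub_div, div_self hN0.ne']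
    have h3 : (μ - (n:ℝ)*p)/((n:ℝ)*p) ≤ K/((n:ℝ)*p) := by
      gcongr
      linarith
    linarith
  have loglow : Real.log ((n:ℝ)*p) ≤ Real.log μ := Real.log_le_log hN0 hNμ
  -- finish
  rw [abs_le]
  have hdiv1 : (0:ℝ) ≤ K/((n:ℝ)*p) := by positivity
  have hdiv2 : (0:ℝ) ≤ 2/K := by positivity
  have hdiv3 : 3/(2*K) ≤ 2/K := by
    rw [div_le_div_iff₀ (by positivity) (by positivity)]
    linarith
  have hdiv4 : 1/K + 1/(2*K) = 3/(2*K) := by field_simp; ring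
  constructor
  · linarith
  · linarith
end
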